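/- If X is a metrizable space with the AP(n,0)-property and Y is a metrizable space with the ∞-DD^{{0,0}}-property (i.e., for every open cover and maps f_X, f_Y : K → X, K → Y defined on a compactum K, f_Y can be approximated by maps injective on the fibers of a given zero-dimensional map), then X × Y has the DD^{{n,n}}-property. -/

import Mathlib

/-- A topological space has covering dimension ≤ 0 if every finite open cover
admits a pairwise disjoint open refinement (still a cover). -/
def DimLE0 (X : Type*) [TopologicalSpace X] : Prop :=
  ∀ (ι : Type) (U : ι → Set X), Finite ι → (∀ i, IsOpen (U i)) →
    (⋃ i, U i) = Set.univ →
    ∃ V : ι → Set X, (∀ i, IsOpen (V i)) ∧ (∀ i, V i ⊆ U i) ∧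
      Pairwise (Function.onFun Disjoint V) ∧ (⋃ i, V i) = Set.univ

/-- The `n`-dimensional cube `Iⁿ`. -/
abbrev Cube (n : ℕ) := Fin n → unitInterval

/-- A map is zero-dimensional if all its fibers are zero-dimensional. -/
def ZeroDimFibers {X M : Type*} [TopologicalSpace X] [TopologicalSpace M]
    (g : X → M) : Prop :=
  ∀ y : M, DimLE0 ↥(g ⁻¹' {y})

/-- Two maps `f, g : X → M` are `ε`-homotopic if there is a homotopy between them
all of whose tracks have diameter `< ε`. -/
def EHomotopic {X M : Type*} [TopologicalSpace X] [MetricSpace M]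
    (f g : C(X, M)) (ε : ℝ) : Prop :=
  ∃ H : ContinuousMap.Homotopy f g,
    ∀ x : X, Metric.diam (Set.range fun t : unitInterval => H (t, x)) < ε

/-- `M` has the `AP(n,0)`-property: every map `Iⁿ → M` is, for each `ε > 0`,
`ε`-homotopic to a map with zero-dimensional fibers. -/
def AP (M : Type*) [MetricSpace M] (n : ℕ) : Prop :=
  ∀ ε : ℝ, 0 < ε → ∀ g : C(Cube n, M),
    ∃ g' : C(Cube n, M), ZeroDimFibers ⇑g' ∧ EHomotopic g g' ε

/-- `f` and `g` are `𝒰`-homotopic: there is a homotopy between them each of whose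
tracks lies in a single member of `𝒰`. -/
def CovHomotopic {X M : Type*} [TopologicalSpace X] [TopologicalSpace M]
    (f g : C(X, M)) (𝒰 : Set (Set M)) : Prop :=
  ∃ H : ContinuousMap.Homotopy f g,
    ∀ x : X, ∃ U ∈ 𝒰, (Set.range fun t : unitInterval => H (t, x)) ⊆ U

/-- `Y` has the `∞-DD^{0,0}`-property: for every open cover `𝒱` of `Y`, every
zero-dimensional map `g_X : Iⁿ ⊕ Iⁿ → X` and every map `f_Y : Iⁿ ⊕ Iⁿ → Y`, there
is a map `g_Y`, `𝒱`-homotopic to `f_Y`, injective on each fiber of `g_X`. -/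
def InftyDD00 (Y : Type*) [TopologicalSpace Y] : Prop :=
  ∀ (n : ℕ) (X : Type) (_ : MetricSpace X)
    (gX : C(Cube n ⊕ Cube n, X)), ZeroDimFibers ⇑gX →
    ∀ 𝒱 : Set (Set Y), (∀ V ∈ 𝒱, IsOpen V) → ⋃₀ 𝒱 = Set.univ →
      ∀ fY : C(Cube n ⊕ Cube n, Y), ∃ gY : C(Cube n ⊕ Cube n, Y),
        CovHomotopic fY gY 𝒱 ∧
        ∀ a b : Cube n ⊕ Cube n, gX a = gX b → gY a = gY b → a = b

/-! ### Auxiliary lemmas -/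

lemma dimLE0_fiber_sumElim {α β γ : Type*} [TopologicalSpace α] [TopologicalSpace β]
    (f : α → γ) (g : β → γ) (y : γ)
    (hf : DimLE0 ↥(f ⁻¹' {y})) (hg : DimLE0 ↥(g ⁻¹' {y})) :
    DimLE0 ↥(Sum.elim f g ⁻¹' {y}) := by
  intro ι U hι hUo hUc
  let j₁ : ↥(f ⁻¹' {y}) → ↥(Sum.elim f g ⁻¹' {y}) := fun a => ⟨Sum.inl a.1, a.2⟩
  let j₂ : ↥(g ⁻¹' {y}) → ↥(Sum.elim f g ⁻¹' {y}) := fun b => ⟨Sum.inr b.1, b.2⟩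
  have hj₁ : Continuous j₁ :=
    Continuous.subtype_mk (continuous_inl.comp continuous_subtype_val) _
  have hj₂ : Continuous j₂ :=
    Continuous.subtype_mk (continuous_inr.comp continuous_subtype_val) _
  obtain ⟨V₁, hV₁o, hV₁s, hV₁d, hV₁c⟩ := hf ι (fun i => j₁ ⁻¹' U i) hι
    (fun i => (hUo i).preimage hj₁)
    (by rw [← Set.preimage_iUnion, hUc, Set.preimage_univ])
  obtain ⟨V₂, hV₂o, hV₂s, hV₂d, hV₂c⟩ := hg ι (fun i => j₂ ⁻¹' U i) hι
    (fun i => (hUo i).preimage hj₂)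
    (by rw [← Set.preimage_iUnion, hUc, Set.preimage_univ])
  have h₁ := fun i => isOpen_induced_iff.mp (hV₁o i)
  have h₂ := fun i => isOpen_induced_iff.mp (hV₂o i)
  choose W₁ hW₁o hW₁ using h₁
  choose W₂ hW₂o hW₂ using h₂
  refine ⟨fun i => Subtype.val ⁻¹' (Sum.inl '' W₁ i ∪ Sum.inr '' W₂ i), ?_, ?_, ?_, ?_⟩
  · intro i
    exact (((isOpenMap_inl _ (hW₁o i)).union (isOpenMap_inr _ (hW₂o i))).preimage
      continuous_subtype_val)
  · rintro i ⟨p, hp⟩ hmem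
    rcases p with a | b
    · rcases hmem with ⟨a', ha', heq⟩ | ⟨b', _, heq⟩
      · cases Sum.inl.inj heq
        have haf : a ∈ f ⁻¹' {y} := hp
        have : (⟨a, haf⟩ : ↥(f ⁻¹' {y})) ∈ V₁ i := by rw [← hW₁ i]; exact ha'
        exact hV₁s i this
      · exact absurd heq (by simp)
    · rcases hmem with ⟨a', _, heq⟩ | ⟨b', hb', heq⟩
      · exact absurd heq (by simp)
      · cases Sum.inr.inj heq
        have hbg : b ∈ g ⁻¹' {y} := hp
        have : (⟨b, hbg⟩ : ↥(g ⁻¹' {y})) ∈ V₂ i := by rw [← hW₂ i]; exact hb'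
        exact hV₂s i this
  · intro i j hij
    rw [Function.onFun, Set.disjoint_left]
    rintro ⟨p, hp⟩ hi hj
    rcases p with a | b
    · have ha : a ∈ W₁ i := by
        rcases hi with ⟨a', ha', heq⟩ | ⟨b', _, heq⟩
        · cases Sum.inl.inj heq; exact ha'
        · exact absurd heq (by simp)
      have ha' : a ∈ W₁ j := by
        rcases hj with ⟨a', ha', heq⟩ | ⟨b', _, heq⟩
        · cases Sum.inl.inj heq; exact ha'
        · exact absurd heq (by simp)
      have haf : a ∈ f ⁻¹' {y} := hp
      have h1 : (⟨a, haf⟩ : ↥(f ⁻¹' {y})) ∈ V₁ i := by rw [← hW₁ i]; exact ha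
      have h2 : (⟨a, haf⟩ : ↥(f ⁻¹' {y})) ∈ V₁ j := by rw [← hW₁ j]; exact ha'
      exact Set.disjoint_left.mp (hV₁d hij) h1 h2
    · have hb : b ∈ W₂ i := by
        rcases hi with ⟨a', _, heq⟩ | ⟨b', hb', heq⟩
        · exact absurd heq (by simp)
        · cases Sum.inr.inj heq; exact hb'
      have hb' : b ∈ W₂ j := by
        rcases hj with ⟨a', _, heq⟩ | ⟨b', hb', heq⟩
        · exact absurd heq (by simp)
        · cases Sum.inr.inj heq; exact hb'
      have hbg : b ∈ g ⁻¹' {y} := hp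
      have h1 : (⟨b, hbg⟩ : ↥(g ⁻¹' {y})) ∈ V₂ i := by rw [← hW₂ i]; exact hb
      have h2 : (⟨b, hbg⟩ : ↥(g ⁻¹' {y})) ∈ V₂ j := by rw [← hW₂ j]; exact hb'
      exact Set.disjoint_left.mp (hV₂d hij) h1 h2
  · rw [Set.eq_univ_iff_forall]
    rintro ⟨p, hp⟩
    rcases p with a | b
    · have haf : a ∈ f ⁻¹' {y} := hp
      have : (⟨a, haf⟩ : ↥(f ⁻¹' {y})) ∈ ⋃ i, V₁ i := by rw [hV₁c]; trivial
      obtain ⟨i, hi⟩ := Set.mem_iUnion.mp this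
      refine Set.mem_iUnion.mpr ⟨i, Or.inl ⟨a, ?_, rfl⟩⟩
      rw [← hW₁ i] at hi; exact hi
    · have hbg : b ∈ g ⁻¹' {y} := hp
      have : (⟨b, hbg⟩ : ↥(g ⁻¹' {y})) ∈ ⋃ i, V₂ i := by rw [hV₂c]; trivial
      obtain ⟨i, hi⟩ := Set.mem_iUnion.mp this
      refine Set.mem_iUnion.mpr ⟨i, Or.inr ⟨b, ?_, rfl⟩⟩
      rw [← hW₂ i] at hi; exact hi

lemma diam_track_prod_lt {X Y : Type*} [MetricSpace X] [MetricSpace Y] {ε : ℝ}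
    (F : unitInterval → X) (G : unitInterval → Y)
    (hF : Continuous F) (hG : Continuous G)
    (h1 : Metric.diam (Set.range F) < ε) (h2 : Metric.diam (Set.range G) < ε) :
    Metric.diam (Set.range fun t => (F t, G t)) < ε := by
  have hbF : Bornology.IsBounded (Set.range F) := (isCompact_range hF).isBounded
  have hbG : Bornology.IsBounded (Set.range G) := (isCompact_range hG).isBounded
  refine lt_of_le_of_lt (Metric.diam_le_of_forall_dist_le
    (le_max_of_le_left Metric.diam_nonneg) ?_) (max_lt h1 h2)
  rintro p ⟨t, rfl⟩ q ⟨s, rfl⟩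
  rw [Prod.dist_eq]
  exact max_le_max
    (Metric.dist_le_diam_of_mem hbF (Set.mem_range_self t) (Set.mem_range_self s))
    (Metric.dist_le_diam_of_mem hbG (Set.mem_range_self t) (Set.mem_range_self s))

/-- Type synonym carrying the pseudometric pulled back along `g`. -/
def PullbackPM {K : Type} {X : Type*} [MetricSpace X] (_g : K → X) : Type := K

instance {K : Type} {X : Type*} [MetricSpace X] (g : K → X) :
    PseudoMetricSpace (PullbackPM g) :=
  PseudoMetricSpace.induced g inferInstance

/-- The metric quotient of the pulled-back pseudometric. -/
def FiberQuot {K : Type} {X : Type*} [MetricSpace X] (g : K → X) : Type :=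
  SeparationQuotient (PullbackPM g)

noncomputable instance {K : Type} {X : Type*} [MetricSpace X] (g : K → X) :
    MetricSpace (FiberQuot g) :=
  SeparationQuotient.instMetricSpace

def fqMap {K : Type} {X : Type*} [MetricSpace X] (g : K → X) : K → FiberQuot g :=
  fun a => SeparationQuotient.mk (a : PullbackPM g)

lemma fqMap_eq_iff {K : Type} {X : Type*} [MetricSpace X] (g : K → X) (a b : K) :
    fqMap g a = fqMap g b ↔ g a = g b := by
  exact (SeparationQuotient.mk_eq_mk (X := PullbackPM g) (x := a) (y := b)).trans
    (Metric.inseparable_iff.trans dist_eq_zero)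

lemma fqMap_surjective {K : Type} {X : Type*} [MetricSpace X] (g : K → X) :
    Function.Surjective (fqMap g) := by
  unfold fqMap
  exact fun z => SeparationQuotient.surjective_mk z

lemma fqMap_continuous {K : Type} [TopologicalSpace K] {X : Type*} [MetricSpace X]
    (g : K → X) (hg : Continuous g) : Continuous (fqMap g) := by
  refine continuous_iff_continuousAt.mpr fun a => ?_
  rw [ContinuousAt, Metric.tendsto_nhds]
  intro ε hε
  have h2 := Metric.tendsto_nhds.mp (hg.tendsto a) ε hε
  refine h2.mono fun x hx => ?_
  have hd : dist (fqMap g x) (fqMap g a) = dist (g x) (g a) := by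
    exact SeparationQuotient.dist_mk (α := PullbackPM g) x a
  rwa [hd]

/-- If `X` has the `AP(n,0)`-property and `Y` has the `∞-DD^{0,0}`-property, then
`X × Y` has the `DD^{n,n}`-property: any two maps `Iⁿ → X × Y` are, for each
`ε > 0`, `ε`-homotopic to maps with disjoint images. -/
theorem stmt16 {X Y : Type*} [MetricSpace X] [MetricSpace Y] (n : ℕ)
    (hX : AP X n) (hY : InftyDD00 Y) :
    ∀ ε : ℝ, 0 < ε → ∀ f g : C(Cube n, X × Y),
      ∃ f' g' : C(Cube n, X × Y), EHomotopic f f' ε ∧ EHomotopic g g' ε ∧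
        Set.range ⇑f' ∩ Set.range ⇑g' = ∅ := by
  intro ε hε f g
  obtain ⟨fX', hfz, HXf, hHXf⟩ := hX ε hε (ContinuousMap.fst.comp f)
  obtain ⟨gX', hgz, HXg, hHXg⟩ := hX ε hε (ContinuousMap.fst.comp g)
  -- the combined zero-dimensional map on the sum
  let gsum : C(Cube n ⊕ Cube n, X) :=
    ⟨Sum.elim ⇑fX' ⇑gX', fX'.continuous.sumElim gX'.continuous⟩
  have hgsumz : ZeroDimFibers ⇑gsum :=
    fun y => dimLE0_fiber_sumElim ⇑fX' ⇑gX' y (hfz y) (hgz y)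
  -- transfer to a `Type 0` metric space
  let gXq : C(Cube n ⊕ Cube n, FiberQuot ⇑gsum) :=
    ⟨fqMap ⇑gsum, fqMap_continuous ⇑gsum gsum.continuous⟩
  have hgXqz : ZeroDimFibers ⇑gXq := by
    intro z
    obtain ⟨b, rfl⟩ := fqMap_surjective ⇑gsum z
    have hset : ⇑gXq ⁻¹' {fqMap ⇑gsum b} = ⇑gsum ⁻¹' {gsum b} := by
      ext a
      simp only [Set.mem_preimage, Set.mem_singleton_iff]
      exact fqMap_eq_iff ⇑gsum a b
    rw [hset]
    exact hgsumz (gsum b)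
  -- the cover by small balls
  let 𝒱 : Set (Set Y) := {V | ∃ c : Y, V = Metric.ball c (ε / 4)}
  have h𝒱o : ∀ V ∈ 𝒱, IsOpen V := by
    rintro V ⟨c, rfl⟩; exact Metric.isOpen_ball
  have h𝒱c : ⋃₀ 𝒱 = Set.univ := by
    rw [Set.eq_univ_iff_forall]
    intro y
    exact ⟨Metric.ball y (ε / 4), ⟨y, rfl⟩, Metric.mem_ball_self (by linarith)⟩
  -- the combined Y-map on the sum
  let fYsum : C(Cube n ⊕ Cube n, Y) :=
    ⟨Sum.elim (fun a => (f a).2) (fun a => (g a).2),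
      ((continuous_snd.comp f.continuous).sumElim (continuous_snd.comp g.continuous))⟩
  obtain ⟨gY, ⟨HY, hHY⟩, hinj⟩ :=
    hY n (FiberQuot ⇑gsum) inferInstance gXq hgXqz 𝒱 h𝒱o h𝒱c fYsum
  -- small diameter of Y-tracks
  have hYtrack : ∀ k : Cube n ⊕ Cube n,
      Metric.diam (Set.range fun t : unitInterval => HY (t, k)) < ε := by
    intro k
    obtain ⟨U, ⟨c, rfl⟩, hsub⟩ := hHY k
    calc Metric.diam (Set.range fun t : unitInterval => HY (t, k))
        ≤ Metric.diam (Metric.ball c (ε / 4)) :=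
          Metric.diam_mono hsub Metric.isBounded_ball
      _ ≤ 2 * (ε / 4) := Metric.diam_ball (by linarith)
      _ < ε := by linarith
  -- the two final maps
  let f' : C(Cube n, X × Y) :=
    ⟨fun a => (fX' a, gY (Sum.inl a)),
      (fX'.continuous.prodMk (gY.continuous.comp continuous_inl))⟩
  let g' : C(Cube n, X × Y) :=
    ⟨fun a => (gX' a, gY (Sum.inr a)),
      (gX'.continuous.prodMk (gY.continuous.comp continuous_inr))⟩
  refine ⟨f', g', ⟨?_, ?_⟩, ⟨?_, ?_⟩, ?_⟩
  -- homotopy f ~ f'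
  · exact
      { toFun := fun p => (HXf p, HY (p.1, Sum.inl p.2))
        continuous_toFun := by
          refine Continuous.prodMk HXf.continuous ?_
          exact HY.continuous.comp
            (continuous_fst.prodMk (continuous_inl.comp continuous_snd))
        map_zero_left := fun x => by
          simp only [ContinuousMap.Homotopy.apply_zero]
          rfl
        map_one_left := fun x => by
          simp only [ContinuousMap.Homotopy.apply_one]
          rfl }
  · intro x
    refine diam_track_prod_lt _ _ ?_ ?_ (hHXf x) (hYtrack (Sum.inl x))
    · exact HXf.continuous.comp (continuous_id.prodMk continuous_const)
    · exact HY.continuous.comp (by fun_prop)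
  -- homotopy g ~ g'
  · exact
      { toFun := fun p => (HXg p, HY (p.1, Sum.inr p.2))
        continuous_toFun := by
          refine Continuous.prodMk HXg.continuous ?_
          exact HY.continuous.comp
            (continuous_fst.prodMk (continuous_inr.comp continuous_snd))
        map_zero_left := fun x => by
          simp only [ContinuousMap.Homotopy.apply_zero]
          rfl
        map_one_left := fun x => by
          simp only [ContinuousMap.Homotopy.apply_one]
          rfl }
  · intro x
    refine diam_track_prod_lt _ _ ?_ ?_ (hHXg x) (hYtrack (Sum.inr x))
    · exact HXg.continuous.comp (continuous_id.prodMk continuous_const)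
    · exact HY.continuous.comp (by fun_prop)
  -- disjoint images
  · rw [Set.eq_empty_iff_forall_notMem]
    rintro p ⟨⟨a, ha⟩, ⟨b, hb⟩⟩
    have h1 : fX' a = gX' b := by
      have := congrArg Prod.fst (ha.trans hb.symm)
      exact this
    have h2 : gY (Sum.inl a) = gY (Sum.inr b) := by
      have := congrArg Prod.snd (ha.trans hb.symm)
      exact this
    have hfib : gXq (Sum.inl a) = gXq (Sum.inr b) := by
      refine (fqMap_eq_iff ⇑gsum (Sum.inl a) (Sum.inr b)).mpr ?_
      exact h1
    have := hinj (Sum.inl a) (Sum.inr b) hfib h2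
    exact Sum.inl_ne_inr this
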